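/- Let 0 < a ≤ b and let f : [0, b] → ℝ be continuously differentiable with 0 ≤ f(r) ≤ 1 for all r, f(b) = 1, and f(r) ≥ 1 − a³/r³ for all r ∈ [a, b]. Then ∫_0^b r f(r) f'(r) dr ≤ a. -/

import Mathlib

open Set MeasureTheory intervalIntegral

theorem stmt_10 (a b : ℝ) (ha : 0 < a) (hab : a ≤ b) (f f' : ℝ → ℝ)
    (hderiv : ∀ r ∈ Set.Icc (0:ℝ) b, HasDerivAt f (f' r) r)
    (hcont : ContinuousOn f' (Set.Icc (0:ℝ) b))
    (hbounds : ∀ r ∈ Set.Icc (0:ℝ) b, 0 ≤ f r ∧ f r ≤ 1)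
    (hfb : f b = 1)
    (hlow : ∀ r ∈ Set.Icc a b, 1 - a ^ 3 / r ^ 3 ≤ f r) :
    ∫ r in (0:ℝ)..b, r * f r * f' r ≤ a := by
  have hb : (0:ℝ) < b := lt_of_lt_of_le ha hab
  have hfc : ContinuousOn f (Icc 0 b) :=
    fun r hr => (hderiv r hr).continuousAt.continuousWithinAt
  have hf2 : ContinuousOn (fun r => f r ^ 2) (Icc (0:ℝ) b) := hfc.pow 2
  have hcross : ContinuousOn (fun r => r * f r * f' r) (Icc (0:ℝ) b) :=
    ((continuousOn_id.mul hfc).mul hcont)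
  have hsub0a : Set.uIcc (0:ℝ) a ⊆ Icc (0:ℝ) b := by
    rw [uIcc_of_le ha.le]; exact Icc_subset_Icc le_rfl hab
  have hsubab : Set.uIcc a b ⊆ Icc (0:ℝ) b := by
    rw [uIcc_of_le hab]; exact Icc_subset_Icc ha.le le_rfl
  have hi_f2_0b : IntervalIntegrable (fun r => f r ^ 2) volume 0 b := by
    apply ContinuousOn.intervalIntegrable; rwa [uIcc_of_le hb.le]
  have hi_f2_0a : IntervalIntegrable (fun r => f r ^ 2) volume 0 a :=
    (hf2.mono hsub0a).intervalIntegrable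
  have hi_f2_ab : IntervalIntegrable (fun r => f r ^ 2) volume a b :=
    (hf2.mono hsubab).intervalIntegrable
  have hi_cross : IntervalIntegrable (fun r => 2 * (r * f r * f' r)) volume 0 b := by
    apply ContinuousOn.intervalIntegrable
    rw [uIcc_of_le hb.le]; exact continuousOn_const.mul hcross
  -- FTC for r * f r ^ 2
  have key : ∫ r in (0:ℝ)..b, (f r ^ 2 + 2 * (r * f r * f' r)) = b := by
    have := intervalIntegral.integral_eq_sub_of_hasDerivAt
      (f := fun r => r * f r ^ 2)
      (f' := fun r => f r ^ 2 + 2 * (r * f r * f' r))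
      (a := 0) (b := b)
      (fun r hr => by
        rw [uIcc_of_le hb.le] at hr
        have h := (hasDerivAt_id r).mul ((hderiv r hr).pow 2)
        exact h.congr_deriv (by simp only [Pi.pow_apply, id_eq]; ring))
      (by
        apply ContinuousOn.intervalIntegrable
        rw [uIcc_of_le hb.le]
        exact hf2.add (continuousOn_const.mul hcross))
    have h2 : ∫ r in (0:ℝ)..b, (f r ^ 2 + 2 * (r * f r * f' r)) = b * f b ^ 2 - 0 * f 0 ^ 2 := this
    rw [h2, hfb]; ring
  have hsplit : (∫ r in (0:ℝ)..b, f r ^ 2) + 2 * ∫ r in (0:ℝ)..b, r * f r * f' r = b := by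
    rw [← intervalIntegral.integral_const_mul, ← intervalIntegral.integral_add hi_f2_0b hi_cross]
    exact key
  -- lower bound on ∫ f²
  have hzpow : ContinuousOn (fun r : ℝ => (1:ℝ) - 2 * a ^ 3 * r ^ (-3 : ℤ)) (Icc a b) := by
    apply continuousOn_const.sub (continuousOn_const.mul _)
    intro x hx
    exact (continuousAt_zpow₀ x (-3) (Or.inl (ne_of_gt (lt_of_lt_of_le ha hx.1)))).continuousWithinAt
  have hi_g : IntervalIntegrable (fun r : ℝ => (1:ℝ) - 2 * a ^ 3 * r ^ (-3 : ℤ)) volume a b := by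
    apply ContinuousOn.intervalIntegrable; rwa [uIcc_of_le hab]
  have hmono : (∫ r in a..b, ((1:ℝ) - 2 * a ^ 3 * r ^ (-3 : ℤ)))
      ≤ ∫ r in a..b, f r ^ 2 := by
    apply intervalIntegral.integral_mono_on hab hi_g hi_f2_ab
    intro r hr
    have hra : a ≤ r := hr.1
    have hr0 : 0 < r := lt_of_lt_of_le ha hra
    have hcube : a ^ 3 ≤ r ^ 3 := pow_le_pow_left₀ ha.le hra 3
    have hle1 : a ^ 3 / r ^ 3 ≤ 1 := by
      rw [div_le_one (by positivity)]; exact hcube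
    have h0 : 0 ≤ 1 - a ^ 3 / r ^ 3 := by linarith
    have h1 : 1 - a ^ 3 / r ^ 3 ≤ f r := hlow r hr
    have hsq : (1 - a ^ 3 / r ^ 3) ^ 2 ≤ f r ^ 2 := by nlinarith
    have hz : (r : ℝ) ^ (-3 : ℤ) = (r ^ 3)⁻¹ := by
      rw [zpow_neg]; norm_cast
    rw [hz]
    have h3 : (0:ℝ) < r ^ 3 := by positivity
    have hq : (0:ℝ) ≤ (a ^ 3 / r ^ 3) ^ 2 := sq_nonneg _
    have hexp : (1 - a ^ 3 / r ^ 3) ^ 2 = 1 - 2 * a ^ 3 * (r ^ 3)⁻¹ + (a ^ 3 / r ^ 3) ^ 2 := by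
      field_simp; ring
    nlinarith [hsq, hq]
  have hgval : (∫ r in a..b, ((1:ℝ) - 2 * a ^ 3 * r ^ (-3 : ℤ))) ≥ b - 2 * a := by
    have hzero : (0:ℝ) ∉ Set.uIcc a b := by
      rw [uIcc_of_le hab]; intro h; exact absurd h.1 (not_le.mpr ha)
    have hiz : IntervalIntegrable (fun r : ℝ => 2 * a ^ 3 * r ^ (-3 : ℤ)) volume a b := by
      apply ContinuousOn.intervalIntegrable
      rw [uIcc_of_le hab]
      apply continuousOn_const.mul
      intro x hx
      exact (continuousAt_zpow₀ x (-3) (Or.inl (ne_of_gt (lt_of_lt_of_le ha hx.1)))).continuousWithinAt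
    rw [intervalIntegral.integral_sub intervalIntegrable_const hiz,
        intervalIntegral.integral_const, intervalIntegral.integral_const_mul,
        integral_zpow (Or.inr ⟨by norm_num, hzero⟩)]
    have ha2 : (a:ℝ) ^ (-2 : ℤ) = (a ^ 2)⁻¹ := by rw [zpow_neg]; norm_cast
    have hb2 : (b:ℝ) ^ (-2 : ℤ) = (b ^ 2)⁻¹ := by rw [zpow_neg]; norm_cast
    norm_num [ha2, hb2]
    have h1 : a ^ 3 * (a ^ 2)⁻¹ = a := by field_simp
    have h2 : 0 ≤ a ^ 3 * (b ^ 2)⁻¹ := by positivity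
    nlinarith [h1, h2]
  have hpos0a : (0:ℝ) ≤ ∫ r in (0:ℝ)..a, f r ^ 2 :=
    intervalIntegral.integral_nonneg ha.le (fun u _ => sq_nonneg _)
  have hS : b - 2 * a ≤ ∫ r in (0:ℝ)..b, f r ^ 2 := by
    rw [← intervalIntegral.integral_add_adjacent_intervals hi_f2_0a hi_f2_ab]
    linarith [hmono, hgval, hpos0a]
  linarith [hsplit, hS]
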